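/- (Double barrier: resonances.) Let N ≥ 1, let C : ℤ → U(2) satisfy the standing Assumption, assume C(x) is diagonal for every x ∈ ℤ∖{0,N} and supp(C−I₂) ⊆ [0,N], and let U = S∘C. Set α = c₂₁(0)·c₁₂(N)·∏_{x=1}^{N−1} det C(x). Then for every λ ∈ ℂ∖{0}, there exists a nonzero outgoing map φ : ℤ → ℂ² with Uφ = λφ if and only if λ^{2N} = α. (Thus the nonzero resonances of U are exactly the 2N-th roots of α.) -/

import Mathlib

noncomputable section

open scoped ComplexConjugate

/-- A state: a map ℤ → ℂ², components `ψ x 0` (left, ψ^L) and `ψ x 1` (right, ψ^R). -/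
abbrev QWState := ℤ → Fin 2 → ℂ

/-- The quantum walk operator U = S∘C acting pointwise:
`(Uψ)(x) = ((C(x+1)ψ(x+1))₁, (C(x−1)ψ(x−1))₂)`. -/
def qwalk (C : ℤ → Matrix (Fin 2) (Fin 2) ℂ) (ψ : QWState) : QWState :=
  fun x => ![(C (x + 1)).mulVec (ψ (x + 1)) 0, (C (x - 1)).mulVec (ψ (x - 1)) 1]

/-- The standing Assumption on the coin. -/
structure CoinAssumption (C : ℤ → Matrix (Fin 2) (Fin 2) ℂ) : Prop where
  unitary : ∀ x, C x ∈ Matrix.unitaryGroup (Fin 2) ℂ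
  d11 : ∀ x, C x 0 0 ≠ 0
  d22 : ∀ x, C x 1 1 ≠ 0
  fin : Set.Finite {x : ℤ | C x ≠ 1}

/-- Outgoing: ψ^L vanishes far right, ψ^R vanishes far left. -/
def Outgoing (ψ : QWState) : Prop :=
  ∃ r : ℤ, 0 < r ∧ ∀ x : ℤ, r < x → ψ x 0 = 0 ∧ ψ (-x) 1 = 0

lemma prodIccSucc (f : ℤ → ℂ) (a b : ℤ) (h : a ≤ b + 1) :
    ∏ y ∈ Finset.Icc a (b+1), f y = (∏ y ∈ Finset.Icc a b, f y) * f (b+1) := by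
  rw [show Finset.Icc a (b+1) = insert (b+1) (Finset.Icc a b) by
    ext z; simp only [Finset.mem_Icc, Finset.mem_insert]; omega,
    Finset.prod_insert (by simp [Finset.mem_Icc])]
  ring

lemma mulVec0 (M : Matrix (Fin 2) (Fin 2) ℂ) (v : Fin 2 → ℂ) :
    M.mulVec v 0 = M 0 0 * v 0 + M 0 1 * v 1 := by
  simp [Matrix.mulVec, dotProduct, Fin.sum_univ_two]

lemma mulVec1 (M : Matrix (Fin 2) (Fin 2) ℂ) (v : Fin 2 → ℂ) :
    M.mulVec v 1 = M 1 0 * v 0 + M 1 1 * v 1 := by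
  simp [Matrix.mulVec, dotProduct, Fin.sum_univ_two]

/-- Double barrier: the nonzero resonances are exactly the 2N-th roots of
α = c₂₁(0)c₁₂(N)∏_{x=1}^{N−1} det C(x). -/
theorem double_barrier_resonances
    (N : ℤ) (hN : 1 ≤ N)
    (C : ℤ → Matrix (Fin 2) (Fin 2) ℂ) (hC : CoinAssumption C)
    (hdiag : ∀ x : ℤ, x ≠ 0 → x ≠ N → C x 0 1 = 0 ∧ C x 1 0 = 0)
    (hsupp : ∀ x : ℤ, C x ≠ 1 → 0 ≤ x ∧ x ≤ N)
    (lam : ℂ) (hlam : lam ≠ 0) :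
    (∃ φ : QWState, (∃ x : ℤ, ∃ i : Fin 2, φ x i ≠ 0) ∧ Outgoing φ ∧
        (∀ x : ℤ, ∀ i : Fin 2, qwalk C φ x i = lam * φ x i))
      ↔ lam ^ (2 * N.toNat)
          = C 0 1 0 * C N 0 1 * ∏ y ∈ Finset.Icc (1:ℤ) (N - 1), (C y).det := by
  have hCone : ∀ x : ℤ, x < 0 ∨ N < x → C x = 1 := by
    intro x hx
    by_contra h
    rcases hsupp x h with ⟨h1, h2⟩
    omega
  set P : ℂ := ∏ y ∈ Finset.Icc (1:ℤ) (N-1), C y 0 0 with hPdef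
  set Q : ℂ := ∏ y ∈ Finset.Icc (1:ℤ) (N-1), C y 1 1 with hQdef
  have hP : P ≠ 0 := Finset.prod_ne_zero_iff.mpr fun y _ => hC.d11 y
  have hQ : Q ≠ 0 := Finset.prod_ne_zero_iff.mpr fun y _ => hC.d22 y
  have hdet : ∏ y ∈ Finset.Icc (1:ℤ) (N - 1), (C y).det = P * Q := by
    rw [hPdef, hQdef, ← Finset.prod_mul_distrib]
    apply Finset.prod_congr rfl
    intro y hy
    simp only [Finset.mem_Icc] at hy
    rw [Matrix.det_fin_two, (hdiag y (by omega) (by omega)).1,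
      (hdiag y (by omega) (by omega)).2]
    ring
  constructor
  · rintro ⟨φ, ⟨x₀, i₀, hφ0⟩, ⟨r, hr, hout⟩, heig⟩
    have eqL : ∀ x : ℤ, lam * φ x 0
        = C (x+1) 0 0 * φ (x+1) 0 + C (x+1) 0 1 * φ (x+1) 1 := by
      intro x
      have h := heig x 0
      rw [show qwalk C φ x 0 = (C (x+1)).mulVec (φ (x+1)) 0 from rfl, mulVec0] at h
      exact h.symm
    have eqR : ∀ x : ℤ, lam * φ x 1
        = C (x-1) 1 0 * φ (x-1) 0 + C (x-1) 1 1 * φ (x-1) 1 := by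
      intro x
      have h := heig x 1
      rw [show qwalk C φ x 1 = (C (x-1)).mulVec (φ (x-1)) 1 from rfl, mulVec1] at h
      exact h.symm
    -- φ^L vanishes on [N, ∞)
    have geomL : ∀ k : ℕ, φ (N + k) 0 = lam ^ k * φ N 0 := by
      intro k
      induction k with
      | zero => simp
      | succ k ih =>
        have h := eqL (N + k)
        rw [hCone (N + k + 1) (Or.inr (by omega))] at h
        simp only [Matrix.one_apply_eq, one_mul, Matrix.one_apply_ne (by decide : (0:Fin 2) ≠ 1),
          zero_mul, add_zero] at h
        rw [show ((N + ((k:ℕ)+1:ℕ)) : ℤ) = N + (k:ℤ) + 1 by push_cast; ring, ← h, ih]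
        ring
    have vanL : ∀ x : ℤ, N ≤ x → φ x 0 = 0 := by
      have hLN : φ N 0 = 0 := by
        set k : ℕ := (r - N).toNat + 1 with hk
        have h1 := (hout (N + k) (by omega)).1
        have h2 := geomL k
        rw [h1] at h2
        exact (mul_eq_zero.mp h2.symm).resolve_left (pow_ne_zero _ hlam)
      intro x hx
      have h := geomL (x - N).toNat
      rw [show (N + ((x - N).toNat : ℤ)) = x by omega, hLN, mul_zero] at h
      exact h
    -- φ^R vanishes on (-∞, 0]
    have geomR : ∀ k : ℕ, φ (-(k:ℤ)) 1 = lam ^ k * φ 0 1 := by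
      intro k
      induction k with
      | zero => simp
      | succ k ih =>
        have h := eqR (-(k:ℤ))
        rw [hCone (-(k:ℤ) - 1) (Or.inl (by omega))] at h
        simp only [Matrix.one_apply_eq, one_mul, Matrix.one_apply_ne (by decide : (1:Fin 2) ≠ 0),
          zero_mul, zero_add] at h
        rw [show (-(((k:ℕ)+1:ℕ):ℤ)) = -(k:ℤ) - 1 by push_cast; ring, ← h, ih]
        ring
    have vanR : ∀ x : ℤ, x ≤ 0 → φ x 1 = 0 := by
      have hR0 : φ 0 1 = 0 := by
        set k : ℕ := r.toNat + 1 with hk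
        have h1 := (hout (k:ℤ) (by omega)).2
        have h2 := geomR k
        rw [h1] at h2
        exact (mul_eq_zero.mp h2.symm).resolve_left (pow_ne_zero _ hlam)
      intro x hx
      have h := geomR (-x).toNat
      rw [show (-(((-x).toNat) : ℤ)) = x by omega, hR0, mul_zero] at h
      exact h
    -- interior propagation, left component
    have hL : ∀ k : ℕ, (k:ℤ) ≤ N - 1 →
        lam ^ k * φ 0 0 = (∏ y ∈ Finset.Icc (1:ℤ) (k:ℤ), C y 0 0) * φ (k:ℤ) 0 := by
      intro k
      induction k with
      | zero => intro _; simp [Finset.Icc_eq_empty (by omega : ¬(1:ℤ) ≤ 0)]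
      | succ k ih =>
        intro hk
        have hk' : (k:ℤ) + 1 ≤ N - 1 := by push_cast at hk ⊢; omega
        have ih' := ih (by omega)
        have h := eqL (k:ℤ)
        rw [(hdiag ((k:ℤ)+1) (by omega) (by omega)).1, zero_mul, add_zero] at h
        have hq := prodIccSucc (fun y => C y 0 0) 1 (k:ℤ) (by omega)
        rw [show (((k:ℕ)+1:ℕ):ℤ) = (k:ℤ) + 1 by push_cast; ring]
        calc lam ^ (k+1) * φ 0 0 = lam * (lam ^ k * φ 0 0) := by ring
          _ = (∏ y ∈ Finset.Icc (1:ℤ) (k:ℤ), C y 0 0) * (lam * φ (k:ℤ) 0) := by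
              rw [ih']; ring
          _ = (∏ y ∈ Finset.Icc (1:ℤ) (k:ℤ), C y 0 0)
                * (C ((k:ℤ)+1) 0 0 * φ ((k:ℤ)+1) 0) := by rw [h]
          _ = (∏ y ∈ Finset.Icc (1:ℤ) ((k:ℤ)+1), C y 0 0) * φ ((k:ℤ)+1) 0 := by
              rw [hq]; ring
    -- interior propagation, right component
    have hR : ∀ k : ℕ, (k:ℤ) ≤ N - 1 →
        lam ^ k * φ ((k:ℤ)+1) 1 = (∏ y ∈ Finset.Icc (1:ℤ) (k:ℤ), C y 1 1) * φ 1 1 := by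
      intro k
      induction k with
      | zero => intro _; simp [Finset.Icc_eq_empty (by omega : ¬(1:ℤ) ≤ 0)]
      | succ k ih =>
        intro hk
        have hk' : (k:ℤ) + 1 ≤ N - 1 := by push_cast at hk ⊢; omega
        have ih' := ih (by omega)
        have h := eqR ((k:ℤ)+2)
        rw [show (k:ℤ)+2-1 = (k:ℤ)+1 by ring,
          (hdiag ((k:ℤ)+1) (by omega) (by omega)).2, zero_mul, zero_add] at h
        have hq := prodIccSucc (fun y => C y 1 1) 1 (k:ℤ) (by omega)
        rw [show (((k:ℕ)+1:ℕ):ℤ) = (k:ℤ) + 1 by push_cast; ring,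
          show (k:ℤ)+1+1 = (k:ℤ)+2 by ring]
        calc lam ^ (k+1) * φ ((k:ℤ)+2) 1 = lam ^ k * (lam * φ ((k:ℤ)+2) 1) := by ring
          _ = lam ^ k * (C ((k:ℤ)+1) 1 1 * φ ((k:ℤ)+1) 1) := by rw [h]
          _ = C ((k:ℤ)+1) 1 1 * (lam ^ k * φ ((k:ℤ)+1) 1) := by ring
          _ = C ((k:ℤ)+1) 1 1 * ((∏ y ∈ Finset.Icc (1:ℤ) (k:ℤ), C y 1 1) * φ 1 1) := by
              rw [ih']
          _ = (∏ y ∈ Finset.Icc (1:ℤ) ((k:ℤ)+1), C y 1 1) * φ 1 1 := by rw [hq]; ring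
    -- the two link equations
    have hb : lam * φ 1 1 = C 0 1 0 * φ 0 0 := by
      have h := eqR 1
      rw [show (1:ℤ)-1 = 0 by ring, vanR 0 le_rfl, mul_zero, add_zero] at h
      exact h
    have hlink : lam * φ (N-1) 0 = C N 0 1 * φ N 1 := by
      have h := eqL (N-1)
      rw [show N-1+1 = N by ring, vanL N le_rfl, mul_zero, zero_add] at h
      exact h
    set m : ℕ := (N-1).toNat with hm
    have hmz : (m:ℤ) = N - 1 := by omega
    have e1 : lam ^ m * φ 0 0 = P * φ (N-1) 0 := by
      have := hL m (by omega)
      rw [hmz] at this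
      exact this
    have e2 : lam ^ m * φ N 1 = Q * φ 1 1 := by
      have := hR m (by omega)
      rw [hmz, show N-1+1 = N by ring] at this
      exact this
    have key : lam ^ (2 * N.toNat) * φ 0 0 = (C 0 1 0 * C N 0 1 * (P * Q)) * φ 0 0 := by
      calc lam ^ (2 * N.toNat) * φ 0 0 = lam ^ (m+2) * (lam ^ m * φ 0 0) := by
            rw [← mul_assoc, ← pow_add, show m + 2 + m = 2 * N.toNat by omega]
        _ = lam ^ (m+2) * (P * φ (N-1) 0) := by rw [e1]
        _ = lam ^ (m+1) * P * (lam * φ (N-1) 0) := by ring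
        _ = lam ^ (m+1) * P * (C N 0 1 * φ N 1) := by rw [hlink]
        _ = lam * P * C N 0 1 * (lam ^ m * φ N 1) := by ring
        _ = lam * P * C N 0 1 * (Q * φ 1 1) := by rw [e2]
        _ = P * C N 0 1 * Q * (lam * φ 1 1) := by ring
        _ = P * C N 0 1 * Q * (C 0 1 0 * φ 0 0) := by rw [hb]
        _ = (C 0 1 0 * C N 0 1 * (P * Q)) * φ 0 0 := by ring
    have ha : φ 0 0 ≠ 0 := by
      intro ha
      have hb0 : φ 1 1 = 0 := by
        have h := hb
        rw [ha, mul_zero] at h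
        exact (mul_eq_zero.mp h).resolve_left hlam
      have vL1 : ∀ x : ℤ, 0 ≤ x → x ≤ N - 1 → φ x 0 = 0 := by
        intro x h0 h1
        have h := hL x.toNat (by omega)
        rw [show ((x.toNat : ℤ)) = x by omega, ha, mul_zero] at h
        exact (mul_eq_zero.mp h.symm).resolve_left
          (Finset.prod_ne_zero_iff.mpr fun y _ => hC.d11 y)
      have vR1 : ∀ x : ℤ, 1 ≤ x → x ≤ N → φ x 1 = 0 := by
        intro x h0 h1
        have h := hR (x-1).toNat (by omega)
        rw [show (((x-1).toNat : ℤ)) = x - 1 by omega, show x-1+1 = x by ring, hb0,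
          mul_zero] at h
        exact (mul_eq_zero.mp h).resolve_left (pow_ne_zero _ hlam)
      have vLneg : ∀ k : ℕ, φ (-(k:ℤ)) 0 = 0 := by
        intro k
        induction k with
        | zero => simpa using ha
        | succ k ih =>
          have h := eqL (-(k:ℤ) - 1)
          rw [show -(k:ℤ)-1+1 = -(k:ℤ) by ring, ih, vanR (-(k:ℤ)) (by omega),
            mul_zero, mul_zero, add_zero] at h
          rw [show (-(((k:ℕ)+1:ℕ)):ℤ) = -(k:ℤ) - 1 by push_cast; ring]
          exact (mul_eq_zero.mp h).resolve_left hlam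
      have vRbig : ∀ k : ℕ, φ (N + 1 + (k:ℤ)) 1 = 0 := by
        intro k
        induction k with
        | zero =>
          have h := eqR (N+1)
          rw [show N+1-1 = N by ring, vanL N le_rfl, vR1 N hN le_rfl,
            mul_zero, mul_zero, add_zero] at h
          simpa using (mul_eq_zero.mp h).resolve_left hlam
        | succ k ih =>
          have h := eqR (N + 1 + (k:ℤ) + 1)
          rw [show N+1+(k:ℤ)+1-1 = N+1+(k:ℤ) by ring,
            hCone (N+1+(k:ℤ)) (Or.inr (by omega))] at h
          simp only [Matrix.one_apply_eq, one_mul,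
            Matrix.one_apply_ne (by decide : (1:Fin 2) ≠ 0), zero_mul, zero_add] at h
          rw [ih] at h
          rw [show (N + 1 + (((k:ℕ)+1:ℕ)):ℤ) = N+1+(k:ℤ)+1 by push_cast; ring]
          exact (mul_eq_zero.mp h).resolve_left hlam
      apply hφ0
      fin_cases i₀
      · rcases lt_or_ge x₀ 0 with hx | hx
        · have := vLneg (-x₀).toNat
          rwa [show (-(((-x₀).toNat):ℤ)) = x₀ by omega] at this
        · rcases lt_or_ge x₀ N with hx2 | hx2
          · exact vL1 x₀ hx (by omega)
          · exact vanL x₀ hx2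
      · rcases le_or_gt x₀ 0 with hx | hx
        · exact vanR x₀ hx
        · rcases le_or_gt x₀ N with hx2 | hx2
          · exact vR1 x₀ hx hx2
          · have := vRbig (x₀ - N - 1).toNat
            rwa [show (N + 1 + (((x₀-N-1).toNat):ℤ)) = x₀ by omega] at this
    rw [hdet]
    exact mul_right_cancel₀ ha key
  · intro hres
    rw [hdet] at hres
    set fL : ℤ → ℂ := fun x =>
      if x < 0 then C 0 0 0 * lam ^ x
      else if x < N then lam ^ x * ∏ y ∈ Finset.Icc (1:ℤ) x, (C y 0 0)⁻¹ else 0 with hfL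
    set fR : ℤ → ℂ := fun x =>
      if x ≤ 0 then 0
      else C 0 1 0 * lam ^ (-x) * ∏ y ∈ Finset.Icc (1:ℤ) (min (x-1) N), C y 1 1 with hfR
    have fL0 : fL 0 = 1 := by
      simp only [hfL]
      rw [if_neg (by omega), if_pos (by omega),
        Finset.Icc_eq_empty (by omega : ¬(1:ℤ) ≤ 0)]
      simp
    have fLvan : ∀ x : ℤ, N ≤ x → fL x = 0 := by
      intro x hx
      simp only [hfL]
      rw [if_neg (by omega), if_neg (by omega)]
    have fRvan : ∀ x : ℤ, x ≤ 0 → fR x = 0 := by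
      intro x hx
      simp only [hfR]
      rw [if_pos (by omega)]
    refine ⟨fun z => ![fL z, fR z], ⟨0, 0, ?_⟩, ⟨N, by omega, fun x hx => ⟨?_, ?_⟩⟩, ?_⟩
    · show fL 0 ≠ 0
      rw [fL0]; exact one_ne_zero
    · exact fLvan x (by omega)
    · exact fRvan (-x) (by omega)
    intro x i
    have goal0 : qwalk C (fun z => ![fL z, fR z]) x 0 = lam * fL x := by
      rw [show qwalk C (fun z => ![fL z, fR z]) x 0
          = (C (x+1)).mulVec ![fL (x+1), fR (x+1)] 0 from rfl, mulVec0]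
      show C (x+1) 0 0 * fL (x+1) + C (x+1) 0 1 * fR (x+1) = lam * fL x
      by_cases hA : x < -1
      · rw [hCone (x+1) (Or.inl (by omega))]
        simp only [Matrix.one_apply_eq, Matrix.one_apply_ne (by decide : (0:Fin 2) ≠ 1),
          one_mul, zero_mul, add_zero]
        simp only [hfL]
        rw [if_pos (by omega : x + 1 < 0), if_pos (by omega : x < 0),
          zpow_add_one₀ hlam]
        ring
      by_cases hB : x = -1
      · subst hB
        rw [show (-1:ℤ) + 1 = 0 by ring, fL0, fRvan 0 le_rfl]
        simp only [hfL]
        rw [if_pos (by omega : (-1:ℤ) < 0)]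
        rw [zpow_neg_one]
        field_simp
        ring
      by_cases hE : N ≤ x
      · rw [fLvan x hE, fLvan (x+1) (by omega), hCone (x+1) (Or.inr (by omega))]
        simp [Matrix.one_apply]
      by_cases hD : x = N - 1
      · subst hD
        rw [show N - 1 + 1 = N by ring, fLvan N le_rfl, mul_zero, zero_add]
        simp only [hfL, hfR]
        rw [if_neg (by omega : ¬ N ≤ 0), if_neg (by omega : ¬ N - 1 < 0),
          if_pos (by omega : N - 1 < N), min_eq_left (by omega : N - 1 ≤ N)]
        rw [Finset.prod_inv_distrib, ← hPdef, ← hQdef]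
        have hkey : lam ^ (N:ℤ) * lam ^ (N:ℤ) = C 0 1 0 * C N 0 1 * (P * Q) := by
          rw [← hres, ← zpow_natCast, show ((2*N.toNat : ℕ) : ℤ) = N + N by omega,
            zpow_add₀ hlam]
        have hLN : lam ^ (N:ℤ) ≠ 0 := zpow_ne_zero _ hlam
        rw [zpow_neg, show N - 1 = N + (-1) by ring, zpow_add₀ hlam, zpow_neg_one]
        field_simp
        linear_combination (-1) * hkey
      -- interior: 0 ≤ x ≤ N - 2
      · have hd := (hdiag (x+1) (by omega) (by omega)).1
        rw [hd, zero_mul, add_zero]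
        simp only [hfL]
        rw [if_neg (by omega : ¬ x + 1 < 0), if_pos (by omega : x + 1 < N),
          if_neg (by omega : ¬ x < 0), if_pos (by omega : x < N),
          prodIccSucc (fun y => (C y 0 0)⁻¹) 1 x (by omega), zpow_add_one₀ hlam]
        have hc := mul_inv_cancel₀ (hC.d11 (x+1))
        linear_combination (lam ^ x * lam * ∏ y ∈ Finset.Icc (1:ℤ) x, (C y 0 0)⁻¹) * hc
    have goal1 : qwalk C (fun z => ![fL z, fR z]) x 1 = lam * fR x := by
      rw [show qwalk C (fun z => ![fL z, fR z]) x 1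
          = (C (x-1)).mulVec ![fL (x-1), fR (x-1)] 1 from rfl, mulVec1]
      show C (x-1) 1 0 * fL (x-1) + C (x-1) 1 1 * fR (x-1) = lam * fR x
      by_cases hA : x ≤ 0
      · rw [hCone (x-1) (Or.inl (by omega))]
        rw [fRvan (x-1) (by omega), fRvan x hA]
        simp
      by_cases hB : x = 1
      · subst hB
        rw [show (1:ℤ) - 1 = 0 by ring, fL0, fRvan 0 le_rfl]
        simp only [hfR]
        rw [if_neg (by omega : ¬ (1:ℤ) ≤ 0), min_eq_left (by omega : (1:ℤ) - 1 ≤ N),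
          show (1:ℤ) - 1 = 0 by ring, Finset.Icc_eq_empty (by omega : ¬(1:ℤ) ≤ 0)]
        rw [show -(1:ℤ) = (-1:ℤ) by ring, zpow_neg_one]
        field_simp
        simp
      by_cases hE : N + 2 ≤ x
      · rw [hCone (x-1) (Or.inr (by omega))]
        simp only [Matrix.one_apply_eq, Matrix.one_apply_ne (by decide : (1:Fin 2) ≠ 0),
          one_mul, zero_mul, zero_add]
        simp only [hfR]
        rw [if_neg (by omega : ¬ x - 1 ≤ 0), if_neg (by omega : ¬ x ≤ 0),
          min_eq_right (by omega : N ≤ x - 1 - 1), min_eq_right (by omega : N ≤ x - 1),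
          show -(x-1) = -x + 1 by ring, zpow_add_one₀ hlam]
        ring
      by_cases hD : x = N + 1
      · subst hD
        rw [show N + 1 - 1 = N by ring, fLvan N le_rfl, mul_zero, zero_add]
        simp only [hfR]
        rw [if_neg (by omega : ¬ N ≤ 0), if_neg (by omega : ¬ N + 1 ≤ 0),
          min_eq_left (by omega : N - 1 ≤ N), min_eq_right (by omega : N ≤ N + 1 - 1)]
        have hq := prodIccSucc (fun y => C y 1 1) 1 (N-1) (by omega)
        rw [show N - 1 + 1 = N by ring] at hq
        rw [hq, show -(N+1) = -N + (-1) by ring, zpow_add₀ hlam, zpow_neg_one]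
        field_simp
      -- interior: 2 ≤ x ≤ N
      · have hd := (hdiag (x-1) (by omega) (by omega)).2
        rw [hd, zero_mul, zero_add]
        simp only [hfR]
        rw [if_neg (by omega : ¬ x - 1 ≤ 0), if_neg (by omega : ¬ x ≤ 0),
          min_eq_left (by omega : x - 1 - 1 ≤ N), min_eq_left (by omega : x - 1 ≤ N)]
        have hq := prodIccSucc (fun y => C y 1 1) 1 (x-1-1) (by omega)
        rw [show x - 1 - 1 + 1 = x - 1 by ring] at hq
        rw [hq, show -(x-1) = -x + 1 by ring, zpow_add_one₀ hlam]
        ring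
    fin_cases i
    · exact goal0
    · exact goal1
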